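/- The optimal value of the optimized mechanism's problem is less than or equal to the optimal value of the robust mechanism's problem: for every feasible (R, q) of the robust problem there is a feasible point of the optimized problem with cost at most cost_rob(R, q). -/

import Mathlib

open Finset

/-- Demand shifted from `z` to `i` in the optimized mechanism. -/
noncomputable def shiftedOpt {N : ℕ} (E0 : Fin N → ℝ)
    (P : Fin N → Fin N → ℝ → ℝ) (R q : Fin N → Fin N → ℝ) (z i : Fin N) : ℝ :=
  q z i * P z i (R z i) * E0 z

/-- Realized aggregate demand in slot `i` for the optimized mechanism. -/
noncomputable def realizedOpt {N : ℕ} (E0 : Fin N → ℝ)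
    (P : Fin N → Fin N → ℝ → ℝ) (R q : Fin N → Fin N → ℝ) (i : Fin N) : ℝ :=
  E0 i + ∑ z, shiftedOpt E0 P R q z i - ∑ k, shiftedOpt E0 P R q i k

/-- Cost of the optimized mechanism. -/
noncomputable def costOpt {N : ℕ} (E0 : Fin N → ℝ)
    (P : Fin N → Fin N → ℝ → ℝ) (c : Fin N → ℝ → ℝ)
    (R q : Fin N → Fin N → ℝ) : ℝ :=
  (∑ i, ∑ z, if z ≠ i then R z i * shiftedOpt E0 P R q z i else 0) +
    ∑ i, c i (realizedOpt E0 P R q i)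

/-- Demand shifted from `z` to `i` in the robust mechanism
(`E_{i→i} = q_i E⁰_i` stays in place but is also rewarded). -/
noncomputable def shiftedRob {N : ℕ} (E0 : Fin N → ℝ)
    (P : Fin N → Fin N → ℝ → ℝ) (R q : Fin N → ℝ) (z i : Fin N) : ℝ :=
  if z = i then q i * E0 i else q i * P z i (R i) * E0 z

/-- Realized aggregate demand in slot `i` for the robust mechanism. -/
noncomputable def realizedRob {N : ℕ} (E0 : Fin N → ℝ)
    (P : Fin N → Fin N → ℝ → ℝ) (R q : Fin N → ℝ) (i : Fin N) : ℝ :=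
  E0 i + (∑ z, if z ≠ i then shiftedRob E0 P R q z i else 0)
    - ∑ k, if k ≠ i then shiftedRob E0 P R q i k else 0

/-- Cost of the robust mechanism: the discount `R i` is paid on all demand ending
up in slot `i` of users in `Q_i`, including the unshifted part `E_{i→i}`. -/
noncomputable def costRob {N : ℕ} (E0 : Fin N → ℝ)
    (P : Fin N → Fin N → ℝ → ℝ) (c : Fin N → ℝ → ℝ) (R q : Fin N → ℝ) : ℝ :=
  (∑ i, ∑ z, R i * shiftedRob E0 P R q z i) +
    ∑ i, c i (realizedRob E0 P R q i)

/-- Every feasible point `(R, q)` of the robust problem maps to the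
feasible point `R_{z→i} := R_i`, `q_{z→i} := q_i` of the optimized problem whose
cost is at most `cost_rob(R, q)`; hence the optimized optimal value is at most the
robust optimal value. -/
theorem optimized_le_robust {N : ℕ} (B : ℝ) (hB : 0 ≤ B) (E0 : Fin N → ℝ)
    (hE0 : ∀ j, 0 ≤ E0 j)
    (P : Fin N → Fin N → ℝ → ℝ)
    (hP : ∀ z i r, P z i r ∈ Set.Icc (0 : ℝ) 1)
    (c : Fin N → ℝ → ℝ)
    (R q : Fin N → ℝ)
    (hR : ∀ i, R i ∈ Set.Icc 0 B)
    (hq : ∀ i, q i ∈ Set.Icc (0 : ℝ) 1)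
    (hqsum : ∑ i, q i ≤ 1) :
    (∀ z i, (fun (_ : Fin N) i => R i) z i ∈ Set.Icc 0 B) ∧
    (∀ z i, (fun (_ : Fin N) i => q i) z i ∈ Set.Icc (0 : ℝ) 1) ∧
    (∀ z : Fin N, ∑ i, (fun (_ : Fin N) i => q i) z i ≤ 1) ∧
    costOpt E0 P c (fun _ i => R i) (fun _ i => q i) ≤ costRob E0 P c R q := by
  refine ⟨fun z i => hR i, fun z i => hq i, fun z => hqsum, ?_⟩
  have key : ∀ (f : Fin N → ℝ) (i : Fin N),
      ∑ z, f z = (∑ z, if z ≠ i then f z else 0) + f i := by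
    intro f i
    have h : ∀ z, f z = (if z ≠ i then f z else 0) + (if z = i then f z else 0) := by
      intro z; by_cases h : z = i <;> simp [h]
    rw [Finset.sum_congr rfl (fun z _ => h z), Finset.sum_add_distrib,
      Finset.sum_ite_eq' Finset.univ i f]
    simp
  have hreal : ∀ i, realizedOpt E0 P (fun _ i => R i) (fun _ i => q i) i
      = realizedRob E0 P R q i := by
    intro i
    unfold realizedOpt realizedRob
    rw [key (fun z => shiftedOpt E0 P (fun _ i => R i) (fun _ i => q i) z i) i,
      key (fun k => shiftedOpt E0 P (fun _ i => R i) (fun _ i => q i) i k) i]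
    have h1 : ∀ z, (if z ≠ i then shiftedOpt E0 P (fun _ i => R i) (fun _ i => q i) z i else 0)
        = (if z ≠ i then shiftedRob E0 P R q z i else 0) := by
      intro z; by_cases h : z = i <;> simp [h, shiftedOpt, shiftedRob]
    have h2 : ∀ k, (if k ≠ i then shiftedOpt E0 P (fun _ i => R i) (fun _ i => q i) i k else 0)
        = (if k ≠ i then shiftedRob E0 P R q i k else 0) := by
      intro k; by_cases h : k = i
      · simp [h]
      · have h' : ¬ (i = k) := fun e => h e.symm
        simp [h, h', shiftedOpt, shiftedRob]
    simp only [Finset.sum_congr rfl (fun z _ => h1 z), Finset.sum_congr rfl (fun k _ => h2 k)]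
    ring
  unfold costOpt costRob
  rw [Finset.sum_congr rfl (fun i _ => congrArg (c i) (hreal i))]
  apply add_le_add_left
  apply Finset.sum_le_sum
  intro i _
  rw [key (fun z => R i * shiftedRob E0 P R q z i) i]
  have h3 : ∀ z, (if z ≠ i then R i * shiftedOpt E0 P (fun _ i => R i) (fun _ i => q i) z i else 0)
      = (if z ≠ i then R i * shiftedRob E0 P R q z i else 0) := by
    intro z; by_cases h : z = i <;> simp [h, shiftedOpt, shiftedRob]
  rw [Finset.sum_congr rfl (fun z _ => h3 z)]
  have : 0 ≤ R i * shiftedRob E0 P R q i i := by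
    simp only [shiftedRob, if_pos rfl]
    exact mul_nonneg (hR i).1 (mul_nonneg (hq i).1 (hE0 i))
  linarith
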